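/- arXiv:1904.08202 — 6 statements merged into one kernel-verified Lean document; each statement's English description precedes it below -/
import Mathlib

section
/- Let X ∈ ℂ^{n×n} be Hermitian with W_c(X) ≻ 0, and set Y_c := diag(I_n + X², I_m)^{-1/2} (so Y_c ⪯ I_{n+m}). Then for every perturbation (Δ_A, Δ_B, Δ_C, Δ_D) of the system coefficients such that det W_c(X; A+Δ_A, B+Δ_B, C+Δ_C, D+Δ_D) = 0, one has λ_min(Y_c · W_c(X) · Y_c) ≤ ‖ [[0, Δ_A, Δ_B],[Δ_Aᴴ, 0, Δ_Cᴴ],[Δ_Bᴴ, Δ_C, Δ_D + Δ_Dᴴ]] ‖₂. In other words, λ_min(Y_c W_c(X) Y_c) is a lower bound for the X-passivity radius ρ_M^c(X) := inf{‖Δ_M‖ : det W_c(X; M+Δ_M) = 0}. -/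
open Matrix
open scoped ComplexOrder Matrix.Norms.L2Operator

/-- The square root of a positive semidefinite matrix, as defined in Mathlib (Dec 2024). -/
noncomputable def Matrix.PosSemidef.sqrt {n : Type*} {𝕜 : Type*} [Fintype n] [RCLike 𝕜]
    [DecidableEq n] {A : Matrix n n 𝕜} (hA : A.PosSemidef) : Matrix n n 𝕜 :=
  (hA.1.eigenvectorUnitary : Matrix n n 𝕜) *
    diagonal (fun i => ((Real.sqrt (hA.1.eigenvalues i) : ℝ) : 𝕜)) *
    (star hA.1.eigenvectorUnitary : Matrix n n 𝕜)

private lemma sqrt_isHermitian' {k : Type*} [Fintype k] [DecidableEq k] {A : Matrix k k ℂ}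
    (hA : A.PosSemidef) : hA.sqrt.IsHermitian := by
  unfold Matrix.PosSemidef.sqrt
  simp [IsHermitian, conjTranspose_mul, diagonal_conjTranspose, Matrix.mul_assoc,
    star_eq_conjTranspose]
  congr 3; funext i; simp

private lemma sqrt_mul_self' {k : Type*} [Fintype k] [DecidableEq k] {A : Matrix k k ℂ}
    (hA : A.PosSemidef) : hA.sqrt * hA.sqrt = A := by
  unfold Matrix.PosSemidef.sqrt
  have hUU : (star hA.1.eigenvectorUnitary : Matrix k k ℂ) *
      (hA.1.eigenvectorUnitary : Matrix k k ℂ) = 1 := Unitary.coe_star_mul_self _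
  have hd : diagonal (fun i => ((Real.sqrt (hA.1.eigenvalues i) : ℝ) : ℂ)) *
      diagonal (fun i => ((Real.sqrt (hA.1.eigenvalues i) : ℝ) : ℂ)) =
      diagonal (RCLike.ofReal ∘ hA.1.eigenvalues) := by
    rw [diagonal_mul_diagonal]; congr 1; funext i
    simp only [Function.comp_apply]
    rw [← Complex.ofReal_mul, Real.mul_self_sqrt (hA.eigenvalues_nonneg i)]; rfl
  conv_rhs => rw [hA.1.spectral_theorem, Unitary.conjStarAlgAut_apply]
  rw [← hd]
  simp only [Matrix.mul_assoc]
  rw [← Matrix.mul_assoc (star hA.1.eigenvectorUnitary : Matrix k k ℂ)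
    (hA.1.eigenvectorUnitary : Matrix k k ℂ), hUU, Matrix.one_mul]
  rfl

private lemma star_dot_mulVec' {k l : Type*} [Fintype k] [Fintype l] (M : Matrix k l ℂ)
    (v : k → ℂ) (x : l → ℂ) :
    star v ⬝ᵥ (M *ᵥ x) = star (Mᴴ *ᵥ v) ⬝ᵥ x := by
  rw [star_mulVec, conjTranspose_conjTranspose, dotProduct_mulVec]

private lemma abs_dot_le_opNorm' {k : Type*} [Fintype k] [DecidableEq k]
    (Δ : Matrix k k ℂ) (w : k → ℂ) :
    |(star w ⬝ᵥ (Δ *ᵥ w)).re| ≤ ‖Δ‖ * (star w ⬝ᵥ w).re := by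
  set w' : EuclideanSpace ℂ k := (WithLp.equiv 2 _).symm w with hw'
  have h1 : star w ⬝ᵥ (Δ *ᵥ w) = inner ℂ w' ((WithLp.equiv 2 _).symm (Δ *ᵥ w)) := by
    rw [dotProduct_comm]; rfl
  have h2 : (star w ⬝ᵥ w).re = ‖w'‖ ^ 2 := by
    have : star w ⬝ᵥ w = inner ℂ w' w' := by rw [dotProduct_comm]; rfl
    rw [this]
    exact_mod_cast inner_self_eq_norm_sq (𝕜 := ℂ) w'
  have h3 : ‖((WithLp.equiv 2 _).symm (Δ *ᵥ w) : EuclideanSpace ℂ k)‖ ≤ ‖Δ‖ * ‖w'‖ :=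
    Δ.l2_opNorm_mulVec w'
  calc |(star w ⬝ᵥ (Δ *ᵥ w)).re| ≤ ‖star w ⬝ᵥ (Δ *ᵥ w)‖ := Complex.abs_re_le_norm _
    _ = ‖inner ℂ w' ((WithLp.equiv 2 _).symm (Δ *ᵥ w) : EuclideanSpace ℂ k)‖ := by rw [h1]
    _ ≤ ‖w'‖ * ‖((WithLp.equiv 2 _).symm (Δ *ᵥ w) : EuclideanSpace ℂ k)‖ :=
        norm_inner_le_norm _ _
    _ ≤ ‖w'‖ * (‖Δ‖ * ‖w'‖) := mul_le_mul_of_nonneg_left h3 (norm_nonneg _)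
    _ = ‖Δ‖ * (star w ⬝ᵥ w).re := by rw [h2]; ring

private lemma re_star_dot_self_pos' {k : Type*} [Fintype k] {u : k → ℂ} (hu : u ≠ 0) :
    0 < (star u ⬝ᵥ u).re := by
  set u' : EuclideanSpace ℂ k := (WithLp.equiv 2 _).symm u with hu'
  have h2 : (star u ⬝ᵥ u).re = ‖u'‖ ^ 2 := by
    have : star u ⬝ᵥ u = inner ℂ u' u' := by rw [dotProduct_comm]; rfl
    rw [this]
    exact_mod_cast inner_self_eq_norm_sq (𝕜 := ℂ) u'
  rw [h2]
  have hu'0 : u' ≠ 0 := fun h => hu (by simpa [hu'] using congrArg (WithLp.equiv 2 _) h)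
  exact pow_pos (norm_pos_iff.mpr hu'0) 2

private lemma rayleigh_iInf_le' {k : Type*} [Fintype k] [DecidableEq k] [Nonempty k]
    {A : Matrix k k ℂ} (hA : A.IsHermitian) (u : k → ℂ) :
    (⨅ i, hA.eigenvalues i) * (star u ⬝ᵥ u).re ≤ (star u ⬝ᵥ (A *ᵥ u)).re := by
  set U : Matrix k k ℂ := (hA.eigenvectorUnitary : Matrix k k ℂ) with hUdef
  have hU : U * star U = 1 := mem_unitaryGroup_iff.mp hA.eigenvectorUnitary.2
  set c : k → ℂ := (star U) *ᵥ u with hc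
  have hstarU : star U = Uᴴ := rfl
  have h1 : star u ⬝ᵥ (A *ᵥ u) =
      star c ⬝ᵥ ((diagonal (Complex.ofReal ∘ hA.eigenvalues)) *ᵥ c) := by
    conv_lhs => rw [hA.spectral_theorem, Unitary.conjStarAlgAut_apply]
    rw [← mulVec_mulVec, ← mulVec_mulVec, star_dot_mulVec', hc, hstarU]
    rfl
  have h2 : star u ⬝ᵥ u = star c ⬝ᵥ c := by
    have hu : U *ᵥ c = u := by rw [hc, mulVec_mulVec, hU, one_mulVec]
    calc star u ⬝ᵥ u = star u ⬝ᵥ (U *ᵥ c) := by rw [hu]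
      _ = star (Uᴴ *ᵥ u) ⬝ᵥ c := star_dot_mulVec' _ _ _
      _ = star c ⬝ᵥ c := by rw [hc, hstarU]
  have h3 : (star c ⬝ᵥ ((diagonal (Complex.ofReal ∘ hA.eigenvalues)) *ᵥ c)).re
      = ∑ i, hA.eigenvalues i * ‖c i‖ ^ 2 := by
    simp only [dotProduct, mulVec_diagonal, Function.comp_apply, Pi.star_apply, Complex.re_sum]
    refine Finset.sum_congr rfl fun i _ => ?_
    have : (starRingEnd ℂ) (c i) * ((hA.eigenvalues i : ℂ) * c i)
        = ((hA.eigenvalues i * ‖c i‖ ^ 2 : ℝ) : ℂ) := by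
      rw [mul_comm ((starRingEnd ℂ) (c i)), mul_assoc, Complex.mul_conj']
      push_cast
      ring
    rw [show (star (c i)) = (starRingEnd ℂ) (c i) from rfl, this, Complex.ofReal_re]
  have h4 : (star c ⬝ᵥ c).re = ∑ i, ‖c i‖ ^ 2 := by
    simp only [dotProduct, Pi.star_apply, Complex.re_sum]
    refine Finset.sum_congr rfl fun i _ => ?_
    rw [show (star (c i)) = (starRingEnd ℂ) (c i) from rfl, mul_comm, Complex.mul_conj']
    norm_cast
  rw [h1, h3, h2, h4, Finset.mul_sum]
  refine Finset.sum_le_sum fun i _ => ?_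
  exact mul_le_mul_of_nonneg_right
    (ciInf_le (Set.Finite.bddBelow (Set.finite_range _)) i) (sq_nonneg _)

set_option maxHeartbeats 2000000 in
/-- lower bound for the continuous-time X-passivity radius.
If `W_c(X) ≻ 0` and `Y_c := diag(I + X², I)^{-1/2}`, then any perturbation
`(ΔA, ΔB, ΔC, ΔD)` making `det W_c(X; M + Δ_M) = 0` satisfies
`λ_min(Y_c W_c(X) Y_c) ≤ ‖[[0, ΔA, ΔB],[ΔAᴴ, 0, ΔCᴴ],[ΔBᴴ, ΔC, ΔD + ΔDᴴ]]‖₂`. -/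
theorem analytic_center_passivity_radius_lower_bound_continuous {n m : ℕ}
    (A : Matrix (Fin n) (Fin n) ℂ) (B : Matrix (Fin n) (Fin m) ℂ)
    (C : Matrix (Fin m) (Fin n) ℂ) (D : Matrix (Fin m) (Fin m) ℂ)
    (X : Matrix (Fin n) (Fin n) ℂ) (hX : X.IsHermitian)
    (hW : (fromBlocks (-(X * A) - Aᴴ * X) (Cᴴ - X * B) (C - Bᴴ * X) (D + Dᴴ)).PosDef)
    (hDg : (fromBlocks (1 + X * X) 0 0 (1 : Matrix (Fin m) (Fin m) ℂ)).PosDef)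
    (Yc : Matrix (Fin n ⊕ Fin m) (Fin n ⊕ Fin m) ℂ)
    (hYc : Yc = (hDg.posSemidef.sqrt)⁻¹)
    (ΔA : Matrix (Fin n) (Fin n) ℂ) (ΔB : Matrix (Fin n) (Fin m) ℂ)
    (ΔC : Matrix (Fin m) (Fin n) ℂ) (ΔD : Matrix (Fin m) (Fin m) ℂ)
    (hdet : (fromBlocks (-(X * (A + ΔA)) - (A + ΔA)ᴴ * X) ((C + ΔC)ᴴ - X * (B + ΔB))
        ((C + ΔC) - (B + ΔB)ᴴ * X) ((D + ΔD) + (D + ΔD)ᴴ)).det = 0)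
    (hH : (Yc * (fromBlocks (-(X * A) - Aᴴ * X) (Cᴴ - X * B) (C - Bᴴ * X) (D + Dᴴ)) *
        Yc).IsHermitian) :
    (⨅ i, hH.eigenvalues i) ≤
      ‖fromBlocks (0 : Matrix (Fin n) (Fin n) ℂ) (fromCols ΔA ΔB)
        (fromRows ΔAᴴ ΔBᴴ) (fromBlocks 0 ΔCᴴ ΔC (ΔD + ΔDᴴ))‖ := by
  subst hYc
  set S : Matrix (Fin n ⊕ Fin m) (Fin n ⊕ Fin m) ℂ := hDg.posSemidef.sqrt with hSdef
  set W : Matrix (Fin n ⊕ Fin m) (Fin n ⊕ Fin m) ℂ :=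
    fromBlocks (-(X * A) - Aᴴ * X) (Cᴴ - X * B) (C - Bᴴ * X) (D + Dᴴ) with hWdef
  set Δ : Matrix (Fin n ⊕ (Fin n ⊕ Fin m)) (Fin n ⊕ (Fin n ⊕ Fin m)) ℂ :=
    fromBlocks (0 : Matrix (Fin n) (Fin n) ℂ) (fromCols ΔA ΔB)
      (fromRows ΔAᴴ ΔBᴴ) (fromBlocks 0 ΔCᴴ ΔC (ΔD + ΔDᴴ)) with hΔdef
  set Z : Matrix (Fin n ⊕ Fin m) (Fin n ⊕ (Fin n ⊕ Fin m)) ℂ :=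
    fromBlocks (-X) (fromCols 1 0) 0 (fromCols 0 1) with hZdef
  -- basic facts about S
  have hSH : S.IsHermitian := sqrt_isHermitian' hDg.posSemidef
  have hSS : S * S = fromBlocks (1 + X * X) 0 0 (1 : Matrix (Fin m) (Fin m) ℂ) :=
    sqrt_mul_self' hDg.posSemidef
  have hdetS : IsUnit S.det := by
    have h1 : S.det * S.det = (fromBlocks (1 + X * X) 0 0
        (1 : Matrix (Fin m) (Fin m) ℂ)).det := by rw [← det_mul, hSS]
    have h2 : (fromBlocks (1 + X * X) 0 0 (1 : Matrix (Fin m) (Fin m) ℂ)).det ≠ 0 :=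
      hDg.det_pos.ne'
    exact isUnit_iff_ne_zero.mpr fun h => h2 (by rw [← h1, h, mul_zero])
  have hYS : S⁻¹ * S = 1 := nonsing_inv_mul S hdetS
  have hSY : S * S⁻¹ = 1 := mul_nonsing_inv S hdetS
  have hYH : (S⁻¹).IsHermitian := hSH.inv
  -- block identities
  have hZZ : Z * Zᴴ = fromBlocks (1 + X * X) 0 0 (1 : Matrix (Fin m) (Fin m) ℂ) := by
    simp [hZdef, fromBlocks_conjTranspose, conjTranspose_fromCols_eq_fromRows_conjTranspose,
      fromBlocks_multiply, fromCols_mul_fromRows, hX.eq, add_comm]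
  have hZΔZ : Z * Δ * Zᴴ =
      fromBlocks (-(X * ΔA) - ΔAᴴ * X) (ΔCᴴ - X * ΔB) (ΔC - ΔBᴴ * X) (ΔD + ΔDᴴ) := by
    simp [hZdef, hΔdef, fromBlocks_conjTranspose,
      conjTranspose_fromCols_eq_fromRows_conjTranspose,
      conjTranspose_fromRows_eq_fromCols_conjTranspose,
      fromBlocks_multiply, fromCols_mul_fromRows, fromCols_mul_fromBlocks,
      fromBlocks_mul_fromRows, mul_fromCols, fromRows_mul, hX.eq, Matrix.add_mul,
      Matrix.mul_add, Matrix.neg_mul, Matrix.mul_neg, sub_eq_add_neg, add_comm]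
  have hW' : fromBlocks (-(X * (A + ΔA)) - (A + ΔA)ᴴ * X) ((C + ΔC)ᴴ - X * (B + ΔB))
      ((C + ΔC) - (B + ΔB)ᴴ * X) ((D + ΔD) + (D + ΔD)ᴴ) = W + Z * Δ * Zᴴ := by
    have e11 : -(X * (A + ΔA)) - (A + ΔA)ᴴ * X
        = (-(X * A) - Aᴴ * X) + (-(X * ΔA) - ΔAᴴ * X) := by
      simp only [conjTranspose_add, Matrix.mul_add, Matrix.add_mul]; abel
    have e12 : (C + ΔC)ᴴ - X * (B + ΔB) = (Cᴴ - X * B) + (ΔCᴴ - X * ΔB) := by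
      simp only [conjTranspose_add, Matrix.mul_add]; abel
    have e21 : (C + ΔC) - (B + ΔB)ᴴ * X = (C - Bᴴ * X) + (ΔC - ΔBᴴ * X) := by
      simp only [conjTranspose_add, Matrix.add_mul]; abel
    have e22 : (D + ΔD) + (D + ΔD)ᴴ = (D + Dᴴ) + (ΔD + ΔDᴴ) := by
      simp only [conjTranspose_add]; abel
    rw [hZΔZ, hWdef, fromBlocks_add, e11, e12, e21, e22]
  -- the singular vector
  rw [hW'] at hdet
  obtain ⟨v, hv0, hv⟩ := (Matrix.exists_mulVec_eq_zero_iff).mpr hdet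
  obtain ⟨i0, -⟩ := Function.ne_iff.mp hv0
  haveI : Nonempty (Fin n ⊕ Fin m) := ⟨i0⟩
  set u : (Fin n ⊕ Fin m) → ℂ := S *ᵥ v with hu
  have hvu : S⁻¹ *ᵥ u = v := by rw [hu, mulVec_mulVec, hYS, one_mulVec]
  have hu0 : u ≠ 0 := by
    intro h
    apply hv0
    rw [← hvu, h, mulVec_zero]
  -- the key vanishing identity
  set K : Matrix (Fin n ⊕ Fin m) (Fin n ⊕ (Fin n ⊕ Fin m)) ℂ := S⁻¹ * Z with hK
  have hKH : Kᴴ = Zᴴ * S⁻¹ := by rw [hK, conjTranspose_mul, hYH.eq]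
  have hKK : K * Kᴴ = 1 := by
    rw [hK, hKH]
    calc S⁻¹ * Z * (Zᴴ * S⁻¹) = S⁻¹ * ((Z * Zᴴ) * S⁻¹) := by simp only [Matrix.mul_assoc]
      _ = S⁻¹ * ((S * S) * S⁻¹) := by rw [hZZ, ← hSS]
      _ = S⁻¹ * (S * (S * S⁻¹)) := by simp only [Matrix.mul_assoc]
      _ = 1 := by rw [hSY, Matrix.mul_one, hYS]
  have hKDK : S⁻¹ * (Z * Δ * Zᴴ) * S⁻¹ = K * Δ * Kᴴ := by
    rw [hK, hKH]
    simp only [Matrix.mul_assoc]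
  have hHu : (S⁻¹ * W * S⁻¹) *ᵥ u = -((K * Δ * Kᴴ) *ᵥ u) := by
    have h0 : (S⁻¹ * (W + Z * Δ * Zᴴ) * S⁻¹) *ᵥ u = 0 := by
      rw [← mulVec_mulVec, ← mulVec_mulVec, hvu, hv, mulVec_zero]
    have hsplit : S⁻¹ * (W + Z * Δ * Zᴴ) * S⁻¹
        = S⁻¹ * W * S⁻¹ + S⁻¹ * (Z * Δ * Zᴴ) * S⁻¹ := by noncomm_ring
    rw [hsplit, add_mulVec, hKDK] at h0
    linear_combination (norm := module) h0
  -- Rayleigh quotient estimates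
  set w : (Fin n ⊕ (Fin n ⊕ Fin m)) → ℂ := Kᴴ *ᵥ u with hw
  have r1 : star u ⬝ᵥ ((S⁻¹ * W * S⁻¹) *ᵥ u) = -(star w ⬝ᵥ (Δ *ᵥ w)) := by
    rw [hHu, dotProduct_neg]
    congr 1
    rw [← mulVec_mulVec, ← mulVec_mulVec, star_dot_mulVec', hw]
  have r2 : star u ⬝ᵥ u = star w ⬝ᵥ w := by
    have hKw : K *ᵥ w = u := by rw [hw, mulVec_mulVec, hKK, one_mulVec]
    calc star u ⬝ᵥ u = star u ⬝ᵥ (K *ᵥ w) := by rw [hKw]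
      _ = star (Kᴴ *ᵥ u) ⬝ᵥ w := star_dot_mulVec' _ _ _
      _ = star w ⬝ᵥ w := by rw [hw]
  have hray := rayleigh_iInf_le' hH u
  have hub : (star u ⬝ᵥ ((S⁻¹ * W * S⁻¹) *ᵥ u)).re ≤ ‖Δ‖ * (star u ⬝ᵥ u).re := by
    rw [r1, r2]
    calc (-(star w ⬝ᵥ (Δ *ᵥ w))).re = -((star w ⬝ᵥ (Δ *ᵥ w)).re) := by simp
      _ ≤ |(star w ⬝ᵥ (Δ *ᵥ w)).re| := neg_le_abs _
      _ ≤ ‖Δ‖ * (star w ⬝ᵥ w).re := abs_dot_le_opNorm' _ _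
  have hpos : 0 < (star u ⬝ᵥ u).re := re_star_dot_self_pos' hu0
  have := hray.trans hub
  exact le_of_mul_le_mul_right this hpos
end

section
/- Let X ∈ ℂ^{n×n} be Hermitian with W_d(X) ≻ 0. For a perturbation (Δ_A, Δ_B, Δ_C, Δ_D) set Δ_R := Δ_D + Δ_Dᴴ, Z_d := −[ (X/2)(A+Δ_A−I_n), (X/2)(B+Δ_B) ] ∈ ℂ^{n×(n+m)} and Y_d := (I_{n+m} + Z_dᴴZ_d)^{-1/2} ⪯ I_{n+m}. If det W_d(X; A+Δ_A, B+Δ_B, C+Δ_C, D+Δ_D) = 0 then λ_min( Y_d ( W_d(X) − [[Aᴴ+I_n],[Bᴴ]]·(X/2)·[Δ_A, Δ_B] − [[Δ_Aᴴ],[Δ_Bᴴ]]·(X/2)·[A+I_n, B] ) Y_d ) ≤ ‖ [[0, Δ_A, Δ_B],[Δ_Aᴴ, 0, Δ_Cᴴ],[Δ_Bᴴ, Δ_C, Δ_R]] ‖₂. -/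
open Matrix
open scoped ComplexOrder Matrix.Norms.L2Operator

lemma rayleigh_aux {N : Type*} [Fintype N] [DecidableEq N] [Nonempty N]
    {M : Matrix N N ℂ} (hM : M.IsHermitian) (u : N → ℂ) :
    (⨅ i, hM.eigenvalues i) * (star u ⬝ᵥ u).re ≤ (star u ⬝ᵥ (M *ᵥ u)).re := by
  set U : Matrix N N ℂ := (hM.eigenvectorUnitary : Matrix N N ℂ) with hU
  set w : N → ℂ := Uᴴ *ᵥ u with hw
  have hsu : star u ᵥ* U = star w := by
    rw [hw, star_mulVec, conjTranspose_conjTranspose]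
  have hUU : U * Uᴴ = 1 := by
    simpa [Matrix.star_eq_conjTranspose] using
      (Matrix.mem_unitaryGroup_iff).mp hM.eigenvectorUnitary.2
  have h1 : star u ⬝ᵥ (M *ᵥ u) = star w ⬝ᵥ (diagonal ((↑) ∘ hM.eigenvalues) *ᵥ w) := by
    conv_lhs => rw [hM.spectral_theorem]
    rw [Unitary.conjStarAlgAut_apply, Matrix.star_eq_conjTranspose, ← hU, Matrix.mul_assoc, ← mulVec_mulVec,
      dotProduct_mulVec, hsu, ← mulVec_mulVec, ← hw]
    rfl
  have h2 : star u ⬝ᵥ u = star w ⬝ᵥ w := by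
    rw [hw, star_mulVec, conjTranspose_conjTranspose, ← dotProduct_mulVec,
      mulVec_mulVec, hUU, one_mulVec]
  rw [h1, h2]
  simp only [dotProduct, mulVec_diagonal, Complex.re_sum, Finset.mul_sum]
  apply Finset.sum_le_sum
  intro i _
  have hterm : (star w i * ((hM.eigenvalues i : ℂ) * w i)).re
      = hM.eigenvalues i * Complex.normSq (w i) := by
    simp [Pi.star_apply, Complex.normSq_apply]
    ring
  rw [Function.comp_apply, hterm]
  have h3 : (star w i * w i).re = Complex.normSq (w i) := by
    simp [Pi.star_apply, Complex.normSq_apply]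
  rw [h3]
  exact mul_le_mul_of_nonneg_right
    (ciInf_le (Set.Finite.bddBelow (Set.finite_range _)) i) (Complex.normSq_nonneg _)

lemma cs_aux {N : Type*} [Fintype N] [DecidableEq N] (Δ : Matrix N N ℂ) (w : N → ℂ) :
    -(star w ⬝ᵥ (Δ *ᵥ w)).re ≤ ‖Δ‖ * (star w ⬝ᵥ w).re := by
  set x : EuclideanSpace ℂ N := (WithLp.equiv 2 _).symm w with hx
  have hinner : (inner ℂ x ((WithLp.equiv 2 (N → ℂ)).symm (Δ *ᵥ w)) : ℂ)
      = star w ⬝ᵥ (Δ *ᵥ w) := by rw [dotProduct_comm]; exact EuclideanSpace.inner_toLp_toLp _ _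
  have hself : (star w ⬝ᵥ w).re = ‖x‖ ^ 2 := by
    have : (inner ℂ x x : ℂ) = star w ⬝ᵥ w := by
      rw [dotProduct_comm]; exact EuclideanSpace.inner_toLp_toLp _ _
    rw [← this]
    rw [congrArg Complex.re (inner_self_eq_norm_sq_to_K (𝕜 := ℂ) x)]
    norm_cast
  have h1 : -(star w ⬝ᵥ (Δ *ᵥ w)).re ≤ ‖(star w ⬝ᵥ (Δ *ᵥ w))‖ := by
    calc -(star w ⬝ᵥ (Δ *ᵥ w)).re = (-(star w ⬝ᵥ (Δ *ᵥ w))).re := by simp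
      _ ≤ ‖(-(star w ⬝ᵥ (Δ *ᵥ w)))‖ := Complex.re_le_norm _
      _ = ‖(star w ⬝ᵥ (Δ *ᵥ w))‖ := by rw [norm_neg]
  have h2 : ‖(star w ⬝ᵥ (Δ *ᵥ w))‖ ≤ ‖Δ‖ * ‖x‖ ^ 2 := by
    rw [← hinner]
    calc ‖(inner ℂ x ((WithLp.equiv 2 (N → ℂ)).symm (Δ *ᵥ w)) : ℂ)‖
        ≤ ‖x‖ * ‖(WithLp.equiv 2 (N → ℂ)).symm (Δ *ᵥ w)‖ := norm_inner_le_norm _ _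
      _ ≤ ‖x‖ * (‖Δ‖ * ‖x‖) := by
          have hmv : ‖(WithLp.equiv 2 (N → ℂ)).symm (Δ *ᵥ w)‖ ≤ ‖Δ‖ * ‖x‖ :=
            Δ.l2_opNorm_mulVec x
          have hx0 : (0:ℝ) ≤ ‖x‖ := norm_nonneg _
          nlinarith [norm_nonneg ((WithLp.equiv 2 (N → ℂ)).symm (Δ *ᵥ w))]
      _ = ‖Δ‖ * ‖x‖ ^ 2 := by ring
  rw [hself]
  exact h1.trans h2

lemma dp_re_nonneg {N : Type*} [Fintype N] (x : N → ℂ) : 0 ≤ (star x ⬝ᵥ x).re := by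
  simp only [dotProduct, Complex.re_sum]
  apply Finset.sum_nonneg
  intro i _
  have : (star x i * x i).re = Complex.normSq (x i) := by
    simp [Pi.star_apply, Complex.normSq_apply]
  rw [this]; exact Complex.normSq_nonneg _

lemma dp_re_pos {N : Type*} [Fintype N] {x : N → ℂ} (hx : x ≠ 0) : 0 < (star x ⬝ᵥ x).re := by
  rcases (dp_re_nonneg x).lt_or_eq with h | h
  · exact h
  · exfalso
    apply hx
    apply dotProduct_star_self_eq_zero.mp
    have him : (star x ⬝ᵥ x).im = 0 := by
      simp only [dotProduct, Complex.im_sum]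
      apply Finset.sum_eq_zero
      intro i _
      simp [Pi.star_apply]
      ring
    exact Complex.ext (h.symm) him

lemma key_identity {n m : ℕ}
    (A ΔA : Matrix (Fin n) (Fin n) ℂ) (B ΔB : Matrix (Fin n) (Fin m) ℂ)
    (C ΔC : Matrix (Fin m) (Fin n) ℂ) (D ΔD : Matrix (Fin m) (Fin m) ℂ)
    (X X2 : Matrix (Fin n) (Fin n) ℂ) (hX2 : X2ᴴ = X2) (hsum : X2 + X2 = X) :
    fromBlocks (X - (A+ΔA)ᴴ*X*(A+ΔA)) ((C+ΔC)ᴴ - (A+ΔA)ᴴ*X*(B+ΔB))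
      ((C+ΔC) - (B+ΔB)ᴴ*X*(A+ΔA)) (((D+ΔD)+(D+ΔD)ᴴ) - (B+ΔB)ᴴ*X*(B+ΔB))
    = (fromBlocks (X - Aᴴ*X*A) (Cᴴ - Aᴴ*X*B)
        (C - Bᴴ*X*A) ((D+Dᴴ) - Bᴴ*X*B)
        - fromRows (Aᴴ+1) Bᴴ * X2 * fromCols ΔA ΔB
        - fromRows ΔAᴴ ΔBᴴ * X2 * fromCols (A+1) B)
      + (-(fromCols (X2*(A+ΔA-1)) (X2*(B+ΔB))))ᴴ * fromCols ΔA ΔB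
      + fromRows ΔAᴴ ΔBᴴ * (-(fromCols (X2*(A+ΔA-1)) (X2*(B+ΔB))))
      + fromBlocks 0 ΔCᴴ ΔC (ΔD+ΔDᴴ) := by
  subst hsum
  simp only [conjTranspose_neg, conjTranspose_fromCols_eq_fromRows_conjTranspose,
    Matrix.neg_mul, Matrix.mul_neg, Matrix.mul_assoc, fromRows_mul, mul_fromCols,
    fromRows_fromCols_eq_fromBlocks, fromCols_fromRows_eq_fromBlocks, fromBlocks_neg,
    sub_eq_add_neg, fromBlocks_add]
  rw [fromBlocks_inj]
  refine ⟨?_, ?_, ?_, ?_⟩ <;>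
  · simp only [conjTranspose_mul, conjTranspose_add, conjTranspose_sub, conjTranspose_one,
      conjTranspose_neg, conjTranspose_conjTranspose, hX2]
    simp only [Matrix.mul_add, Matrix.add_mul, Matrix.neg_mul, Matrix.mul_neg,
      Matrix.mul_one, Matrix.one_mul, Matrix.mul_assoc, neg_add_rev, neg_neg]
    abel

set_option maxHeartbeats 1600000

/-- lower bound for the discrete-time X-passivity radius.
If `W_d(X) ≻ 0`, `Z_d := -[(X/2)(A+ΔA-I), (X/2)(B+ΔB)]`, `Y_d := (I + Z_dᴴZ_d)^{-1/2}`,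
and `det W_d(X; M + Δ_M) = 0`, then
`λ_min(Y_d (W_d(X) - [[Aᴴ+I],[Bᴴ]](X/2)[ΔA, ΔB] - [[ΔAᴴ],[ΔBᴴ]](X/2)[A+I, B]) Y_d)
  ≤ ‖[[0, ΔA, ΔB],[ΔAᴴ, 0, ΔCᴴ],[ΔBᴴ, ΔC, ΔR]]‖₂`. -/
theorem analytic_center_passivity_radius_lower_bound_discrete {n m : ℕ}
    (A : Matrix (Fin n) (Fin n) ℂ) (B : Matrix (Fin n) (Fin m) ℂ)
    (C : Matrix (Fin m) (Fin n) ℂ) (D : Matrix (Fin m) (Fin m) ℂ)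
    (X : Matrix (Fin n) (Fin n) ℂ) (hX : X.IsHermitian)
    (hW : (fromBlocks (X - Aᴴ * X * A) (Cᴴ - Aᴴ * X * B)
        (C - Bᴴ * X * A) ((D + Dᴴ) - Bᴴ * X * B)).PosDef)
    (ΔA : Matrix (Fin n) (Fin n) ℂ) (ΔB : Matrix (Fin n) (Fin m) ℂ)
    (ΔC : Matrix (Fin m) (Fin n) ℂ) (ΔD : Matrix (Fin m) (Fin m) ℂ)
    (Zd : Matrix (Fin n) (Fin n ⊕ Fin m) ℂ)
    (hZd : Zd = -(fromCols (((2 : ℂ)⁻¹ • X) * (A + ΔA - 1)) (((2 : ℂ)⁻¹ • X) * (B + ΔB))))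
    (hIZ : (1 + Zdᴴ * Zd).PosDef)
    (Yd : Matrix (Fin n ⊕ Fin m) (Fin n ⊕ Fin m) ℂ)
    (hYd : Yd = (hIZ.posSemidef.1.cfc Real.sqrt)⁻¹)
    (hdet : (fromBlocks (X - (A + ΔA)ᴴ * X * (A + ΔA)) ((C + ΔC)ᴴ - (A + ΔA)ᴴ * X * (B + ΔB))
        ((C + ΔC) - (B + ΔB)ᴴ * X * (A + ΔA))
        (((D + ΔD) + (D + ΔD)ᴴ) - (B + ΔB)ᴴ * X * (B + ΔB))).det = 0)
    (hH : (Yd * (fromBlocks (X - Aᴴ * X * A) (Cᴴ - Aᴴ * X * B)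
          (C - Bᴴ * X * A) ((D + Dᴴ) - Bᴴ * X * B)
        - fromRows (Aᴴ + 1) Bᴴ * ((2 : ℂ)⁻¹ • X) * fromCols ΔA ΔB
        - fromRows ΔAᴴ ΔBᴴ * ((2 : ℂ)⁻¹ • X) * fromCols (A + 1) B) * Yd).IsHermitian) :
    (⨅ i, hH.eigenvalues i) ≤
      ‖fromBlocks (0 : Matrix (Fin n) (Fin n) ℂ) (fromCols ΔA ΔB)
        (fromRows ΔAᴴ ΔBᴴ) (fromBlocks 0 ΔCᴴ ΔC (ΔD + ΔDᴴ))‖ := by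
  rcases isEmpty_or_nonempty (Fin n ⊕ Fin m) with hE | hNE
  · rw [Matrix.det_isEmpty] at hdet
    exact absurd hdet one_ne_zero
  -- notation
  set X2 : Matrix (Fin n) (Fin n) ℂ := (2 : ℂ)⁻¹ • X with hX2def
  have hX2herm : X2ᴴ = X2 := by
    rw [hX2def, conjTranspose_smul, hX.eq]
    norm_num
  have hX2sum : X2 + X2 = X := by
    rw [hX2def, ← add_smul]
    norm_num
  set F : Matrix (Fin n) (Fin n ⊕ Fin m) ℂ := fromCols ΔA ΔB with hF
  set F' : Matrix (Fin n ⊕ Fin m) (Fin n) ℂ := fromRows ΔAᴴ ΔBᴴ with hF'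
  set G : Matrix (Fin n ⊕ Fin m) (Fin n ⊕ Fin m) ℂ := fromBlocks 0 ΔCᴴ ΔC (ΔD + ΔDᴴ) with hG
  set W : Matrix (Fin n ⊕ Fin m) (Fin n ⊕ Fin m) ℂ :=
    fromBlocks (X - Aᴴ * X * A) (Cᴴ - Aᴴ * X * B)
      (C - Bᴴ * X * A) ((D + Dᴴ) - Bᴴ * X * B) with hWdef
  set W' : Matrix (Fin n ⊕ Fin m) (Fin n ⊕ Fin m) ℂ :=
    fromBlocks (X - (A + ΔA)ᴴ * X * (A + ΔA)) ((C + ΔC)ᴴ - (A + ΔA)ᴴ * X * (B + ΔB))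
      ((C + ΔC) - (B + ΔB)ᴴ * X * (A + ΔA))
      (((D + ΔD) + (D + ΔD)ᴴ) - (B + ΔB)ᴴ * X * (B + ΔB)) with hW'def
  set H₀ : Matrix (Fin n ⊕ Fin m) (Fin n ⊕ Fin m) ℂ := W - fromRows (Aᴴ + 1) Bᴴ * X2 * F
    - F' * X2 * fromCols (A + 1) B with hH₀
  have key : W' = H₀ + Zdᴴ * F + F' * Zd + G := by
    rw [hW'def, hH₀, hWdef, hF, hF', hG, hZd]
    exact key_identity A ΔA B ΔB C ΔC D ΔD X X2 hX2herm hX2sum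
  have hH₀' : H₀ = W' - (Zdᴴ * F + F' * Zd + G) := by rw [key]; abel
  -- the null vector
  obtain ⟨v, hv0, hWv⟩ := Matrix.exists_mulVec_eq_zero_iff.mpr hdet
  -- the square root
  set S : Matrix (Fin n ⊕ Fin m) (Fin n ⊕ Fin m) ℂ := hIZ.posSemidef.1.cfc Real.sqrt with hS
  have hcfc : S = cfc Real.sqrt (1 + Zdᴴ * Zd) := (hIZ.posSemidef.1.cfc_eq _).symm
  have hSherm : S.IsHermitian := by
    rw [hcfc]; exact cfc_predicate _ _
  have hSS : S * S = 1 + Zdᴴ * Zd := by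
    rw [hcfc, ← cfc_mul _ _ (1 + Zdᴴ * Zd)]
    conv_rhs => rw [← cfc_id' ℝ (1 + Zdᴴ * Zd) hIZ.posSemidef.1]
    apply cfc_congr
    intro x hx
    have hx0 : 0 ≤ x := by
      have h := (posSemidef_iff_isHermitian_and_spectrum_nonneg.mp hIZ.posSemidef).2 hx
      simpa [Complex.zero_le_real] using h
    exact Real.mul_self_sqrt hx0
  have hSdet : IsUnit S.det := by
    have h1 : S.det * S.det = (1 + Zdᴴ * Zd).det := by rw [← det_mul, hSS]
    have h2 : (1 + Zdᴴ * Zd).det ≠ 0 := hIZ.det_pos.ne'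
    have : S.det ≠ 0 := by
      intro h
      rw [h, mul_zero] at h1
      exact h2 h1.symm
    exact this.isUnit
  have hYdS : Yd * S = 1 := by rw [hYd]; exact Matrix.nonsing_inv_mul S hSdet
  have hYdherm : Ydᴴ = Yd := by rw [hYd]; exact hSherm.inv
  set u : (Fin n ⊕ Fin m) → ℂ := S *ᵥ v with hu
  have hYdu : Yd *ᵥ u = v := by rw [hu, mulVec_mulVec, hYdS, one_mulVec]
  -- |u|^2 = |w|^2 where w = (Zd v, v)
  set w : (Fin n ⊕ (Fin n ⊕ Fin m)) → ℂ := Sum.elim (Zd *ᵥ v) v with hw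
  have huu : star u ⬝ᵥ u = star v ⬝ᵥ v + star (Zd *ᵥ v) ⬝ᵥ (Zd *ᵥ v) := by
    rw [hu, star_mulVec, hSherm.eq, ← dotProduct_mulVec, mulVec_mulVec, hSS,
      Matrix.add_mulVec, one_mulVec, dotProduct_add, ← mulVec_mulVec,
      dotProduct_mulVec (star v) Zdᴴ, ← star_mulVec]
  have hww : star w ⬝ᵥ w = star u ⬝ᵥ u := by
    rw [hw, huu]
    have : star (Sum.elim (Zd *ᵥ v) v) = Sum.elim (star (Zd *ᵥ v)) (star v) := by
      ext i; cases i <;> rfl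
    rw [this, sumElim_dotProduct_sumElim]
    ring
  -- the big Delta matrix
  set Δfull : Matrix (Fin n ⊕ (Fin n ⊕ Fin m)) (Fin n ⊕ (Fin n ⊕ Fin m)) ℂ :=
    fromBlocks 0 F F' G with hΔfull
  have hΔw : star w ⬝ᵥ (Δfull *ᵥ w)
      = star (Zd *ᵥ v) ⬝ᵥ (F *ᵥ v) + (star v ⬝ᵥ (F' *ᵥ (Zd *ᵥ v)) + star v ⬝ᵥ (G *ᵥ v)) := by
    rw [hΔfull, hw]
    have hmv : fromBlocks 0 F F' G *ᵥ Sum.elim (Zd *ᵥ v) v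
        = Sum.elim ((0 : Matrix (Fin n) (Fin n) ℂ) *ᵥ (Zd *ᵥ v) + F *ᵥ v)
          (F' *ᵥ (Zd *ᵥ v) + G *ᵥ v) := by
      rw [fromBlocks_mulVec]
      rfl
    rw [hmv]
    have hst : star (Sum.elim (Zd *ᵥ v) v) = Sum.elim (star (Zd *ᵥ v)) (star v) := by
      ext i; cases i <;> rfl
    rw [hst, sumElim_dotProduct_sumElim, Matrix.zero_mulVec, zero_add, dotProduct_add]
  -- quadratic form of H₀ at v
  have hH₀v : star v ⬝ᵥ (H₀ *ᵥ v) = -(star w ⬝ᵥ (Δfull *ᵥ w)) := by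
    rw [hH₀', Matrix.sub_mulVec, hWv, dotProduct_sub, dotProduct_zero, zero_sub, neg_inj, hΔw,
      Matrix.add_mulVec, Matrix.add_mulVec, dotProduct_add, dotProduct_add,
      ← mulVec_mulVec v Zdᴴ F, ← mulVec_mulVec v F' Zd,
      dotProduct_mulVec (star v) Zdᴴ, ← star_mulVec]
    ring
  -- Hermitian structure
  have hWherm : Wᴴ = W := by
    rw [hWdef]
    rw [fromBlocks_conjTranspose, fromBlocks_inj]
    refine ⟨?_, ?_, ?_, ?_⟩ <;>
      simp [conjTranspose_mul, conjTranspose_sub, conjTranspose_add, hX.eq, Matrix.mul_assoc,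
        add_comm]
  have hH₀herm : H₀ᴴ = H₀ := by
    rw [hH₀]
    rw [hF, hF']
    simp only [conjTranspose_sub, conjTranspose_mul, hX2herm, hWherm,
      conjTranspose_fromCols_eq_fromRows_conjTranspose,
      conjTranspose_fromRows_eq_fromCols_conjTranspose, conjTranspose_add,
      conjTranspose_one, conjTranspose_conjTranspose, Matrix.mul_assoc]
    abel
  have hH2 : (Yd * H₀ * Yd).IsHermitian := by
    have : (Yd * H₀ * Yd)ᴴ = Yd * H₀ * Yd := by
      rw [conjTranspose_mul, conjTranspose_mul, hYdherm, hH₀herm, Matrix.mul_assoc]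
    exact this
  -- Rayleigh quotient bound
  have hray := rayleigh_aux hH2 u
  have hstep : (Yd * H₀ * Yd) *ᵥ u = Yd *ᵥ (H₀ *ᵥ v) := by
    have h1 : (Yd * H₀ * Yd) *ᵥ u = (Yd * H₀) *ᵥ (Yd *ᵥ u) := (mulVec_mulVec u (Yd * H₀) Yd).symm
    rw [h1, hYdu, ← mulVec_mulVec]
  have hMu : star u ⬝ᵥ ((Yd * H₀ * Yd) *ᵥ u) = star v ⬝ᵥ (H₀ *ᵥ v) := by
    rw [hstep, dotProduct_mulVec, ← hYdherm, ← star_mulVec, hYdu]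
  have hcs := cs_aux Δfull w
  have hp : 0 < (star u ⬝ᵥ u).re := by
    rw [huu, Complex.add_re]
    have h1 := dp_re_pos hv0
    have h2 := dp_re_nonneg (Zd *ᵥ v)
    linarith
  have final : (⨅ i, hH2.eigenvalues i) * (star u ⬝ᵥ u).re ≤ ‖Δfull‖ * (star u ⬝ᵥ u).re := by
    calc (⨅ i, hH2.eigenvalues i) * (star u ⬝ᵥ u).re
        ≤ (star u ⬝ᵥ ((Yd * H₀ * Yd) *ᵥ u)).re := hray
      _ = (star v ⬝ᵥ (H₀ *ᵥ v)).re := by rw [hMu]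
      _ = -(star w ⬝ᵥ (Δfull *ᵥ w)).re := by rw [hH₀v, Complex.neg_re]
      _ ≤ ‖Δfull‖ * (star w ⬝ᵥ w).re := hcs
      _ = ‖Δfull‖ * (star u ⬝ᵥ u).re := by rw [hww]
  exact le_of_mul_le_mul_right final hp
end

section
/- Let A ∈ ℂ^{n×n}, B ∈ ℂ^{n×m}, C ∈ ℂ^{m×n}, D ∈ ℂ^{m×m} with R := D + Dᴴ ≻ 0, and let X ∈ ℂ^{n×n} be Hermitian with P_c := Ricc_c(X) = −XA − AᴴX − (Cᴴ − XB)R⁻¹(C − BᴴX) ≻ 0. Set F_c := R⁻¹(C − BᴴX) and A_{F_c} := A − BF_c. Then the following are equivalent: (i) Re tr( W_c(X)⁻¹ · [[AᴴΔ + ΔA, ΔB],[BᴴΔ, 0]] ) = 0 for every Hermitian Δ ∈ ℂ^{n×n} (i.e., X is a critical point of the barrier function b(X) = −ln det W_c(X)); (ii) P_c⁻¹ A_{F_c}ᴴ + A_{F_c} P_c⁻¹ = 0. -/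
open Matrix
open scoped ComplexOrder

private lemma trace_fromBlocks' {p q : Type*} [Fintype p] [Fintype q]
    (A : Matrix p p ℂ) (B : Matrix p q ℂ) (C : Matrix q p ℂ) (D : Matrix q q ℂ) :
    (fromBlocks A B C D).trace = A.trace + D.trace := by
  simp [Matrix.trace, Fintype.sum_sum_type, Matrix.diag]

private lemma herm_trace_zero {n : ℕ} (M : Matrix (Fin n) (Fin n) ℂ)
    (hM : M.IsHermitian) (h : (M * M).trace.re = 0) : M = 0 := by
  have h1 : (M * M).trace = ∑ i, ∑ j, M i j * (starRingEnd ℂ) (M i j) := by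
    simp only [Matrix.trace, Matrix.diag, Matrix.mul_apply]
    refine Finset.sum_congr rfl fun i _ => Finset.sum_congr rfl fun j _ => ?_
    rw [← hM.apply i j]
    simp
  have h2 : (M * M).trace.re = ∑ i, ∑ j, Complex.normSq (M i j) := by
    rw [h1, Complex.re_sum]
    refine Finset.sum_congr rfl fun i _ => ?_
    rw [Complex.re_sum]
    refine Finset.sum_congr rfl fun j _ => ?_
    rw [Complex.mul_conj]
    simp
  rw [h2] at h
  ext i j
  have h3 := (Finset.sum_eq_zero_iff_of_nonneg (fun i _ => Finset.sum_nonneg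
    (fun j _ => Complex.normSq_nonneg _))).mp h i (Finset.mem_univ _)
  have h4 := (Finset.sum_eq_zero_iff_of_nonneg
    (fun j _ => Complex.normSq_nonneg _)).mp h3 j (Finset.mem_univ _)
  simpa [Complex.normSq_eq_zero] using h4

/-- characterization of critical points of the continuous-time
barrier function `b(X) = -ln det W_c(X)`: the gradient condition
`Re tr(W_c(X)⁻¹ · [[AᴴΔ + ΔA, ΔB],[BᴴΔ, 0]]) = 0` for all Hermitian `Δ`
is equivalent to `P_c⁻¹ A_{F_c}ᴴ + A_{F_c} P_c⁻¹ = 0`. -/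
theorem critical_point_iff_closed_loop_equation_continuous {n m : ℕ}
    (A : Matrix (Fin n) (Fin n) ℂ) (B : Matrix (Fin n) (Fin m) ℂ)
    (C : Matrix (Fin m) (Fin n) ℂ) (D : Matrix (Fin m) (Fin m) ℂ)
    (X : Matrix (Fin n) (Fin n) ℂ) (hX : X.IsHermitian)
    (R : Matrix (Fin m) (Fin m) ℂ) (hR : R = D + Dᴴ) (hRpd : R.PosDef)
    (F : Matrix (Fin m) (Fin n) ℂ) (hF : F = R⁻¹ * (C - Bᴴ * X))
    (P : Matrix (Fin n) (Fin n) ℂ)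
    (hP : P = -(X * A) - Aᴴ * X - (Cᴴ - X * B) * R⁻¹ * (C - Bᴴ * X))
    (hPpd : P.PosDef)
    (AF : Matrix (Fin n) (Fin n) ℂ) (hAF : AF = A - B * F) :
    (∀ Δ : Matrix (Fin n) (Fin n) ℂ, Δ.IsHermitian →
        ((fromBlocks (-(X * A) - Aᴴ * X) (Cᴴ - X * B) (C - Bᴴ * X) R)⁻¹ *
          fromBlocks (Aᴴ * Δ + Δ * A) (Δ * B) (Bᴴ * Δ) 0).trace.re = 0)
      ↔ P⁻¹ * AFᴴ + AF * P⁻¹ = 0 := by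
  have hSH : (Cᴴ - X * B)ᴴ = C - Bᴴ * X := by
    rw [conjTranspose_sub, conjTranspose_conjTranspose, conjTranspose_mul, hX.eq]
  set S : Matrix (Fin n) (Fin m) ℂ := Cᴴ - X * B with hS
  have hRH : Rᴴ = R := by rw [hR]; simp [conjTranspose_add, add_comm]
  have hRiH : (R⁻¹)ᴴ = R⁻¹ := by rw [conjTranspose_nonsing_inv, hRH]
  have hPiH : (P⁻¹)ᴴ = P⁻¹ := hPpd.isHermitian.inv
  have hRinv : R * R⁻¹ = 1 :=
    mul_nonsing_inv _ ((Matrix.isUnit_iff_isUnit_det _).1 hRpd.isUnit)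
  have hPinv : P * P⁻¹ = 1 :=
    mul_nonsing_inv _ ((Matrix.isUnit_iff_isUnit_det _).1 hPpd.isUnit)
  have hPinv' : ∀ (k : ℕ) (Y : Matrix (Fin n) (Fin k) ℂ), P * (P⁻¹ * Y) = Y :=
    fun k Y => by rw [← Matrix.mul_assoc, hPinv, Matrix.one_mul]
  have hRinv' : ∀ (k : ℕ) (Y : Matrix (Fin m) (Fin k) ℂ), R * (R⁻¹ * Y) = Y :=
    fun k Y => by rw [← Matrix.mul_assoc, hRinv, Matrix.one_mul]
  have hA1 : -(X * A) - Aᴴ * X = P + S * (R⁻¹ * Sᴴ) := by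
    rw [hP, hSH, Matrix.mul_assoc]
    abel
  set Winv : Matrix (Fin n ⊕ Fin m) (Fin n ⊕ Fin m) ℂ :=
    fromBlocks P⁻¹ (-(P⁻¹ * (S * R⁻¹))) (-(R⁻¹ * (Sᴴ * P⁻¹)))
      (R⁻¹ + R⁻¹ * (Sᴴ * (P⁻¹ * (S * R⁻¹)))) with hWinv
  have hW : (fromBlocks (-(X * A) - Aᴴ * X) S (C - Bᴴ * X) R)⁻¹ = Winv := by
    apply inv_eq_right_inv
    rw [← hSH, hWinv, fromBlocks_multiply, hA1]
    have e11 : (P + S * (R⁻¹ * Sᴴ)) * P⁻¹ + S * -(R⁻¹ * (Sᴴ * P⁻¹)) = 1 := by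
      rw [Matrix.add_mul, hPinv]
      simp only [Matrix.mul_neg, Matrix.mul_assoc]
      abel
    have e12 : (P + S * (R⁻¹ * Sᴴ)) * -(P⁻¹ * (S * R⁻¹))
        + S * (R⁻¹ + R⁻¹ * (Sᴴ * (P⁻¹ * (S * R⁻¹)))) = 0 := by
      simp only [Matrix.mul_neg, Matrix.add_mul, Matrix.mul_add,
        Matrix.mul_assoc, hPinv']
      abel
    have e21 : Sᴴ * P⁻¹ + R * -(R⁻¹ * (Sᴴ * P⁻¹)) = 0 := by
      simp only [Matrix.mul_neg, hRinv']
      abel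
    have e22 : Sᴴ * -(P⁻¹ * (S * R⁻¹))
        + R * (R⁻¹ + R⁻¹ * (Sᴴ * (P⁻¹ * (S * R⁻¹)))) = 1 := by
      simp only [Matrix.mul_neg, Matrix.mul_add, hRinv, hRinv',
        Matrix.mul_assoc]
      abel
    rw [e11, e12, e21, e22, fromBlocks_one]
  have hFH : Fᴴ = S * R⁻¹ := by
    rw [hF, conjTranspose_mul, hRiH, ← hSH, conjTranspose_conjTranspose]
  have key : ∀ Δ : Matrix (Fin n) (Fin n) ℂ,
      (Winv * fromBlocks (Aᴴ * Δ + Δ * A) (Δ * B) (Bᴴ * Δ) 0).trace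
        = ((P⁻¹ * AFᴴ + AF * P⁻¹) * Δ).trace := by
    intro Δ
    have hAFH : AFᴴ = Aᴴ - S * R⁻¹ * Bᴴ := by
      rw [hAF, conjTranspose_sub, conjTranspose_mul, hFH]
    rw [hWinv, fromBlocks_multiply, trace_fromBlocks', hAFH, hAF, hF, ← hSH]
    simp only [Matrix.mul_zero, add_zero, Matrix.mul_add, Matrix.add_mul,
      Matrix.sub_mul, Matrix.mul_sub, Matrix.neg_mul, Matrix.mul_neg,
      trace_add, trace_sub, trace_neg, trace_zero, ← Matrix.mul_assoc]
    rw [trace_mul_cycle P⁻¹ Δ A, trace_mul_cycle (R⁻¹ * Sᴴ * P⁻¹) Δ B]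
    simp only [Matrix.mul_assoc]
    ring
  set M : Matrix (Fin n) (Fin n) ℂ := P⁻¹ * AFᴴ + AF * P⁻¹ with hM
  have hMH : M.IsHermitian := by
    rw [Matrix.IsHermitian, hM, conjTranspose_add, conjTranspose_mul,
      conjTranspose_mul, conjTranspose_conjTranspose, hPiH]
    abel
  constructor
  · intro h
    refine herm_trace_zero M hMH ?_
    have := h M hMH
    rwa [hW, key] at this
  · intro h Δ _
    rw [hW, key, h, Matrix.zero_mul, trace_zero, Complex.zero_re]
end

section
/- Let A_F ∈ ℂ^{n×n}, B ∈ ℂ^{n×m}, let P ∈ ℂ^{n×n} be Hermitian positive definite and S ∈ ℂ^{m×m} Hermitian positive definite, and assume the pair (A_F, B) is controllable in the Hautus sense: for every λ ∈ ℂ and every nonzero v ∈ ℂⁿ with vᴴA_F = λvᴴ one has vᴴB ≠ 0. If the Stein (discrete Lyapunov) equation A_F P A_Fᴴ − P + B S Bᴴ = 0 holds, then every eigenvalue of A_F has modulus strictly less than 1. -/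
open Matrix
open scoped ComplexOrder

/-- if `(A_F, B)` is controllable (Hautus test) and the Stein
equation `A_F P A_Fᴴ − P + B S Bᴴ = 0` holds with `P ≻ 0` and `S ≻ 0`, then
every eigenvalue of `A_F` lies strictly inside the unit circle. -/
theorem stein_equation_eigenvalues_inside_unit_circle {n m : ℕ}
    (AF : Matrix (Fin n) (Fin n) ℂ) (B : Matrix (Fin n) (Fin m) ℂ)
    (P : Matrix (Fin n) (Fin n) ℂ) (S : Matrix (Fin m) (Fin m) ℂ)
    (hP : P.PosDef) (hS : S.PosDef)
    (hautus : ∀ (μ : ℂ) (v : Fin n → ℂ), v ≠ 0 →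
        Matrix.vecMul (star v) AF = μ • star v → Matrix.vecMul (star v) B ≠ 0)
    (hstein : AF * P * AFᴴ - P + B * S * Bᴴ = 0) :
    ∀ μ ∈ spectrum ℂ AF, ‖μ‖ < 1 := by
  intro μ hμ
  by_contra hge
  push_neg at hge
  -- determinant of μ•1 - AF vanishes
  have hdet : (μ • (1 : Matrix (Fin n) (Fin n) ℂ) - AF).det = 0 := by
    rw [spectrum.mem_iff] at hμ
    by_contra hd
    exact hμ (by
      have : IsUnit (μ • (1 : Matrix (Fin n) (Fin n) ℂ) - AF) :=
        (Matrix.isUnit_iff_isUnit_det _).2 (isUnit_iff_ne_zero.2 hd)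
      simpa [Algebra.algebraMap_eq_smul_one] using this)
  have hdet2 : ((starRingEnd ℂ) μ • (1 : Matrix (Fin n) (Fin n) ℂ) - AFᴴ).det = 0 := by
    have : ((μ • (1 : Matrix (Fin n) (Fin n) ℂ) - AF)ᴴ).det = 0 := by
      rw [Matrix.det_conjTranspose, hdet, star_zero]
    simpa [Matrix.conjTranspose_sub, Matrix.conjTranspose_smul] using this
  obtain ⟨v, hv0, hv⟩ := (Matrix.exists_mulVec_eq_zero_iff).2 hdet2
  have hAFv : AFᴴ *ᵥ v = (starRingEnd ℂ) μ • v := by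
    have := hv
    rw [Matrix.sub_mulVec, Matrix.smul_mulVec, Matrix.one_mulVec, sub_eq_zero] at this
    exact this.symm
  have heig : Matrix.vecMul (star v) AF = μ • star v := by
    have := congrArg star hAFv
    rwa [Matrix.star_mulVec, Matrix.conjTranspose_conjTranspose, star_smul,
      Complex.star_def, Complex.conj_conj] at this
  have hB := hautus μ v hv0 heig
  set u : Fin m → ℂ := Bᴴ *ᵥ v with hu_def
  have hsu : star u = Matrix.vecMul (star v) B := by
    rw [hu_def, Matrix.star_mulVec, Matrix.conjTranspose_conjTranspose]
  have hu0 : u ≠ 0 := by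
    intro h
    apply hB
    rw [← hsu, h, star_zero]
  set c : ℂ := star v ⬝ᵥ P *ᵥ v with hc_def
  set d : ℂ := star u ⬝ᵥ S *ᵥ u with hd_def
  have hcpos : 0 < c := hP.dotProduct_mulVec_pos hv0
  have hdpos : 0 < d := hS.dotProduct_mulVec_pos hu0
  -- quadratic form applied to Stein equation
  have hq : star v ⬝ᵥ (AF * P * AFᴴ - P + B * S * Bᴴ) *ᵥ v = 0 := by
    rw [hstein, Matrix.zero_mulVec, dotProduct_zero]
  have t1 : star v ⬝ᵥ (AF * P * AFᴴ) *ᵥ v = (starRingEnd ℂ) μ * (μ * c) := by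
    rw [← Matrix.mulVec_mulVec, hAFv, Matrix.mulVec_smul, dotProduct_smul,
      Matrix.dotProduct_mulVec, ← Matrix.vecMul_vecMul, heig, Matrix.smul_vecMul,
      smul_dotProduct, ← Matrix.dotProduct_mulVec, smul_eq_mul, smul_eq_mul]
  have t3 : star v ⬝ᵥ (B * S * Bᴴ) *ᵥ v = d := by
    rw [← Matrix.mulVec_mulVec, ← Matrix.mulVec_mulVec, Matrix.dotProduct_mulVec, ← hsu]
  rw [Matrix.add_mulVec, Matrix.sub_mulVec, dotProduct_add, dotProduct_sub, t1, t3] at hq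
  -- take real parts
  have hkey : (Complex.normSq μ : ℂ) * c - c + d = 0 := by
    rw [← hq, ← Complex.mul_conj, hc_def]
    ring
  have hre : Complex.normSq μ * c.re - c.re + d.re = 0 := by
    have := congrArg Complex.re hkey
    simpa [Complex.sub_re, Complex.add_re, Complex.mul_re, Complex.ofReal_re,
      Complex.ofReal_im] using this
  have hcre : 0 < c.re := (Complex.lt_def.1 hcpos).1
  have hdre : 0 < d.re := (Complex.lt_def.1 hdpos).1
  have hns : 1 ≤ Complex.normSq μ := by
    rw [← Complex.sq_norm]
    nlinarith [norm_nonneg μ]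
  nlinarith
end

section
/- Let A ∈ ℂ^{n×n}, B ∈ ℂ^{n×m}, C ∈ ℂ^{m×n}, R ∈ ℂ^{m×m} Hermitian, and X ∈ ℂ^{n×n} Hermitian. Then the determinant of the block matrix [[0, I_n, (X/2)(A − I_n), (X/2)B],[I_n, 0, A + I_n, B],[(Aᴴ − I_n)(X/2), Aᴴ + I_n, 0, Cᴴ],[Bᴴ(X/2), Bᴴ, C, R]] equals (−1)ⁿ · det W_d(X), where W_d(X) := [[X − AᴴXA, Cᴴ − AᴴXB],[C − BᴴXA, R − BᴴXB]]; indeed W_d(X) is the Schur complement of the leading 2n×2n block of that matrix. -/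
open Matrix
open scoped ComplexOrder

lemma fromBlocks_sub' {l m n o : Type*} (A A' : Matrix n l ℂ) (B B' : Matrix n m ℂ)
    (C C' : Matrix o l ℂ) (D D' : Matrix o m ℂ) :
    fromBlocks A B C D - fromBlocks A' B' C' D' =
      fromBlocks (A - A') (B - B') (C - C') (D - D') := by
  ext (i | i) (j | j) <;> simp [fromBlocks]

lemma det_swap_blocks {n : ℕ} :
    (fromBlocks (0 : Matrix (Fin n) (Fin n) ℂ) (1 : Matrix (Fin n) (Fin n) ℂ) 1 0).det = (-1 : ℂ) ^ n := by
  have h : (fromBlocks (0 : Matrix (Fin n) (Fin n) ℂ) 1 1 0) =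
      (fromBlocks 1 1 0 1 : Matrix (Fin n ⊕ Fin n) (Fin n ⊕ Fin n) ℂ) *
        (fromBlocks 1 0 (-1) 1 : Matrix (Fin n ⊕ Fin n) (Fin n ⊕ Fin n) ℂ) *
        (fromBlocks 1 1 0 1 : Matrix (Fin n ⊕ Fin n) (Fin n ⊕ Fin n) ℂ) *
        (fromBlocks (-1) 0 0 1 : Matrix (Fin n ⊕ Fin n) (Fin n ⊕ Fin n) ℂ) := by
    simp [fromBlocks_multiply, Matrix.fromBlocks_smul]
  rw [h]
  simp [det_fromBlocks_zero₂₁, det_fromBlocks_zero₁₂, det_neg]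

/-- the determinant of the embedded 4×4 block matrix
`[[0, I, (X/2)(A−I), (X/2)B],[I, 0, A+I, B],[(Aᴴ−I)(X/2), Aᴴ+I, 0, Cᴴ],[Bᴴ(X/2), Bᴴ, C, R]]`
equals `(−1)ⁿ · det W_d(X)`. -/
theorem det_embedding_eq_det_Wd {n m : ℕ}
    (A : Matrix (Fin n) (Fin n) ℂ) (B : Matrix (Fin n) (Fin m) ℂ)
    (C : Matrix (Fin m) (Fin n) ℂ)
    (R : Matrix (Fin m) (Fin m) ℂ) (hR : R.IsHermitian)
    (X : Matrix (Fin n) (Fin n) ℂ) (hX : X.IsHermitian) :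
    (fromBlocks
        (fromBlocks (0 : Matrix (Fin n) (Fin n) ℂ) 1 1 0)
        (fromBlocks (((2 : ℂ)⁻¹ • X) * (A - 1)) (((2 : ℂ)⁻¹ • X) * B) (A + 1) B)
        (fromBlocks ((Aᴴ - 1) * ((2 : ℂ)⁻¹ • X)) (Aᴴ + 1) (Bᴴ * ((2 : ℂ)⁻¹ • X)) Bᴴ)
        (fromBlocks 0 Cᴴ C R)).det =
      (-1 : ℂ) ^ n *
        (fromBlocks (X - Aᴴ * X * A) (Cᴴ - Aᴴ * X * B)
          (C - Bᴴ * X * A) (R - Bᴴ * X * B)).det := by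
  set M : Matrix (Fin n ⊕ Fin n) (Fin n ⊕ Fin n) ℂ := fromBlocks 0 1 1 0 with hMdef
  have hM : M * M = 1 := by
    simp [hMdef, fromBlocks_multiply, ← fromBlocks_one]
  letI : Invertible M := invertibleOfLeftInverse M M hM
  have hinv : ⅟M = M := invOf_eq_right_inv hM
  rw [det_fromBlocks₁₁, hinv, det_swap_blocks]
  congr 2
  rw [hMdef, fromBlocks_multiply, fromBlocks_multiply, fromBlocks_sub']
  rw [fromBlocks_inj]
  refine ⟨?_, ?_, ?_, ?_⟩ <;>
  · simp only [Matrix.mul_zero, Matrix.zero_mul, Matrix.mul_one, Matrix.one_mul,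
      Matrix.add_mul, Matrix.mul_add, Matrix.sub_mul, Matrix.mul_sub,
      Matrix.mul_smul, Matrix.smul_mul, zero_add, add_zero, Matrix.mul_assoc]
    try simp only [smul_add, smul_sub, Matrix.mul_assoc]
    module
end

section
/- Let A_c ∈ ℂ^{n×n} with I − A_c invertible, B_c ∈ ℂ^{n×m}, Q_c ∈ ℂ^{n×n} Hermitian, C_c ∈ ℂ^{m×n}, R_c ∈ ℂ^{m×m} Hermitian, and X ∈ ℂ^{n×n} Hermitian. Define A_d := (A_c − I)⁻¹(I + A_c), B_d := √2·(A_c − I)⁻¹B_c, T_c := [[√2(I − A_c)⁻¹, (I − A_c)⁻¹B_c],[0, I_m]], and [[Q_d, C_dᴴ],[C_d, R_d]] := T_cᴴ [[Q_c, C_cᴴ],[C_c, R_c]] T_c. Then T_cᴴ · ( [[Q_c, C_cᴴ],[C_c, R_c]] − [[A_cᴴ, I_n],[B_cᴴ, 0]]·[[0, X],[X, 0]]·[[A_c, B_c],[I_n, 0]] ) · T_c = [[Q_d, C_dᴴ],[C_d, R_d]] − [[A_dᴴ, I_n],[B_dᴴ, 0]]·[[X, 0],[0, −X]]·[[A_d,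 B_d],[I_n, 0]]. In particular, the continuous-time LMI matrix with data (Q_c, C_c, R_c) evaluated at X is congruent, via T_c, to the discrete-time LMI matrix with the transformed data (A_d, B_d, Q_d, C_d, R_d) evaluated at the same X. -/
open Matrix
open scoped ComplexOrder

/-- the bilinear (Cayley) transform turns the continuous-time
LMI matrix into the discrete-time LMI matrix by congruence with `T_c`:
`T_cᴴ (K_c − [[A_cᴴ, I],[B_cᴴ, 0]]·[[0, X],[X, 0]]·[[A_c, B_c],[I, 0]]) T_c
  = K_d − [[A_dᴴ, I],[B_dᴴ, 0]]·[[X, 0],[0, −X]]·[[A_d, B_d],[I, 0]]`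
where `K_c = [[Q_c, C_cᴴ],[C_c, R_c]]` and `K_d = T_cᴴ K_c T_c`. -/
theorem cayley_transform_LMI_congruence {n m : ℕ}
    (Ac : Matrix (Fin n) (Fin n) ℂ) (hInv : IsUnit ((1 : Matrix (Fin n) (Fin n) ℂ) - Ac))
    (Bc : Matrix (Fin n) (Fin m) ℂ)
    (Qc : Matrix (Fin n) (Fin n) ℂ) (hQc : Qc.IsHermitian)
    (Cc : Matrix (Fin m) (Fin n) ℂ)
    (Rc : Matrix (Fin m) (Fin m) ℂ) (hRc : Rc.IsHermitian)
    (X : Matrix (Fin n) (Fin n) ℂ) (hX : X.IsHermitian)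
    (Ad : Matrix (Fin n) (Fin n) ℂ) (hAd : Ad = (Ac - 1)⁻¹ * (1 + Ac))
    (Bd : Matrix (Fin n) (Fin m) ℂ)
    (hBd : Bd = ((Real.sqrt 2 : ℝ) : ℂ) • ((Ac - 1)⁻¹ * Bc))
    (Tc : Matrix (Fin n ⊕ Fin m) (Fin n ⊕ Fin m) ℂ)
    (hTc : Tc = fromBlocks (((Real.sqrt 2 : ℝ) : ℂ) • (1 - Ac)⁻¹) ((1 - Ac)⁻¹ * Bc) 0 1)
    (Kd : Matrix (Fin n ⊕ Fin m) (Fin n ⊕ Fin m) ℂ)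
    (hKd : Kd = Tcᴴ * fromBlocks Qc Ccᴴ Cc Rc * Tc) :
    Tcᴴ * (fromBlocks Qc Ccᴴ Cc Rc -
        fromBlocks Acᴴ (1 : Matrix (Fin n) (Fin n) ℂ) Bcᴴ 0 *
          (fromBlocks 0 X X 0 : Matrix (Fin n ⊕ Fin n) (Fin n ⊕ Fin n) ℂ) *
          fromBlocks Ac Bc (1 : Matrix (Fin n) (Fin n) ℂ) 0) * Tc =
      Kd - fromBlocks Adᴴ (1 : Matrix (Fin n) (Fin n) ℂ) Bdᴴ 0 *
          (fromBlocks X 0 0 (-X) : Matrix (Fin n ⊕ Fin n) (Fin n ⊕ Fin n) ℂ) *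
          fromBlocks Ad Bd (1 : Matrix (Fin n) (Fin n) ℂ) 0 := by
  set c : ℂ := ((Real.sqrt 2 : ℝ) : ℂ) with hc
  set S : Matrix (Fin n) (Fin n) ℂ := (1 - Ac)⁻¹ with hS
  have hdet : IsUnit ((1 : Matrix (Fin n) (Fin n) ℂ) - Ac).det :=
    (Matrix.isUnit_iff_isUnit_det _).mp hInv
  have hS1 : (1 - Ac) * S = 1 := Matrix.mul_nonsing_inv _ hdet
  have hS2 : S * (1 - Ac) = 1 := Matrix.nonsing_inv_mul _ hdet
  have hAcS : Ac * S = S - 1 := by rw [← hS1]; noncomm_ring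
  have hSAc : S * Ac = S - 1 := by rw [← hS2]; noncomm_ring
  have hSA : Sᴴ * Acᴴ = Sᴴ - 1 := by
    have := congrArg conjTranspose hAcS; simpa using this
  have hAS : Acᴴ * Sᴴ = Sᴴ - 1 := by
    have := congrArg conjTranspose hSAc; simpa using this
  have hneg : (Ac - 1)⁻¹ = -S := by
    apply Matrix.inv_eq_right_inv
    rw [show (Ac - 1) * (-S) = (1 - Ac) * S by noncomm_ring, hS1]
  have hAd' : Ad = 1 - (S + S) := by
    rw [hAd, hneg, neg_mul, mul_add, mul_one, hSAc]; abel
  have hBd' : Bd = -(c • (S * Bc)) := by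
    rw [hBd, hneg]; simp
  have hcstar : star c = c := by simp [hc]
  have hc2 : c * c = 2 := by
    rw [hc, ← Complex.ofReal_mul, Real.mul_self_sqrt (by norm_num)]; norm_num
  have hL : ∀ (k : ℕ) (Y : Matrix (Fin k) (Fin n) ℂ), Y * Ac * S = Y * S - Y := by
    intro k Y; rw [Matrix.mul_assoc, hAcS, Matrix.mul_sub, Matrix.mul_one]
  have hR : ∀ (k : ℕ) (Y : Matrix (Fin k) (Fin n) ℂ), Y * Sᴴ * Acᴴ = Y * Sᴴ - Y := by
    intro k Y; rw [Matrix.mul_assoc, hSA, Matrix.mul_sub, Matrix.mul_one]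
  rw [hKd, mul_sub, sub_mul]
  congr 1
  rw [hTc, hAd', hBd']
  simp only [fromBlocks_conjTranspose, fromBlocks_multiply, conjTranspose_smul,
    conjTranspose_neg, conjTranspose_one, conjTranspose_zero, conjTranspose_sub,
    conjTranspose_mul, conjTranspose_add, hcstar,
    Matrix.mul_zero, Matrix.zero_mul, Matrix.mul_one, Matrix.one_mul,
    add_zero, zero_add, Matrix.smul_mul, Matrix.mul_smul]
  rw [fromBlocks_inj]
  refine ⟨?_, ?_, ?_, ?_⟩ <;>
  · simp only [Matrix.mul_add, Matrix.add_mul, Matrix.sub_mul, Matrix.mul_sub,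
      Matrix.neg_mul, Matrix.mul_neg, smul_add, smul_sub, smul_neg, neg_smul,
      Matrix.mul_smul, Matrix.smul_mul, Matrix.one_mul, Matrix.mul_one, ← Matrix.mul_assoc]
    try simp only [hL, hR, hSA]
    try simp only [Matrix.sub_mul, Matrix.mul_sub, Matrix.add_mul, Matrix.mul_add,
      Matrix.one_mul, Matrix.mul_one, smul_smul, hc2, smul_add, smul_sub, smul_neg]
    module
end
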